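/- Let G be a finite simple graph with α(G) > |V(G)|/2 and let F be the family of all maximum independent sets of G. If ⋂_{S∈F} S = {u} is a single vertex, then α(G) = (|V(G)|+1)/2 and u is an isolated vertex of G. -/

import Mathlib

open Finset

/-- If `α(G) > |V(G)|/2` and the intersection of all maximum
independent sets of `G` is a single vertex `u`, then `α(G) = (|V(G)|+1)/2`
and `u` is isolated. -/
theorem stmt_2 {V : Type*} [Fintype V] (G : SimpleGraph V) (α : ℕ)
    (hα : IsGreatest {n : ℕ | ∃ S : Finset V,
        (∀ v ∈ S, ∀ w ∈ S, v ≠ w → ¬ G.Adj v w) ∧ S.card = n} α)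
    (hbig : Fintype.card V < 2 * α) (u : V)
    (hu : (⋂ S ∈ {S : Finset V | (∀ v ∈ S, ∀ w ∈ S, v ≠ w → ¬ G.Adj v w) ∧ S.card = α},
        (S : Set V)) = {u}) :
    2 * α = Fintype.card V + 1 ∧ ∀ v : V, ¬ G.Adj u v := by
  classical
  obtain ⟨hmem, hub⟩ := hα
  obtain ⟨S₀, hS₀ind, hS₀card⟩ := hmem
  set P : Finset V → Prop := fun S => (∀ v ∈ S, ∀ w ∈ S, v ≠ w → ¬ G.Adj v w) ∧ S.card = α
    with hPdef
  -- main induction on finite families of maximum independent sets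
  have key : ∀ 𝓕 : Finset (Finset V), 𝓕.Nonempty → (∀ S ∈ 𝓕, P S) →
      2 * α ≤ (𝓕.inf id).card + (𝓕.sup id).card ∧
      𝓕.inf id ⊆ 𝓕.sup id ∧
      (∀ x ∈ 𝓕.inf id, ∀ y ∈ 𝓕.sup id, ¬ G.Adj x y) := by
    intro 𝓕
    induction 𝓕 using Finset.induction with
    | empty => intro h; exact absurd rfl h.ne_empty
    | @insert S 𝓕 hS𝓕 IH =>
      intro _ hall
      have hS : P S := hall S (mem_insert_self _ _)
      rcases 𝓕.eq_empty_or_nonempty with h𝓕 | h𝓕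
      · subst h𝓕
        simp only [inf_insert, sup_insert, Finset.inf_empty, Finset.sup_empty, id]
        constructor
        · have : S ⊓ ⊤ = S := by simp
          rw [this]
          have : S ⊔ (⊥ : Finset V) = S := by simp
          rw [this, hS.2]; omega
        constructor
        · intro x hx
          simp only [Finset.inf_eq_inter, Finset.sup_eq_union] at *
          simp only [Finset.mem_inter] at hx
          exact Finset.mem_union_left _ hx.1
        · intro x hx y hy
          simp only [Finset.inf_eq_inter, Finset.sup_eq_union, Finset.mem_inter,
            Finset.mem_union] at hx hy
          rcases hy with hy | hy
          · by_cases hxy : x = y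
            · subst hxy; exact G.irrefl
            · exact hS.1 x hx.1 y hy hxy
          · exact absurd hy (by simp)
      obtain ⟨hcard, hsub, hadj⟩ := IH h𝓕 (fun T hT => hall T (mem_insert_of_mem hT))
      set I := 𝓕.inf id with hI
      set U := 𝓕.sup id with hU
      have hinf : (insert S 𝓕).inf id = S ∩ I := by
        rw [inf_insert]; rfl
      have hsup : (insert S 𝓕).sup id = S ∪ U := by
        rw [sup_insert]; rfl
      rw [hinf, hsup]
      -- the adjacency property first
      have hadj' : ∀ x ∈ S ∩ I, ∀ y ∈ S ∪ U, ¬ G.Adj x y := by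
        intro x hx y hy
        rw [Finset.mem_inter] at hx
        rcases Finset.mem_union.mp hy with hy | hy
        · by_cases hxy : x = y
          · subst hxy; exact G.irrefl
          · exact hS.1 x hx.1 y hy hxy
        · exact hadj x hx.2 y hy
      refine ⟨?_, ?_, hadj'⟩
      · -- cardinality: use that W = I ∪ (U ∩ S) is independent
        set W := I ∪ (U ∩ S) with hW
        have hWind : ∀ v ∈ W, ∀ w ∈ W, v ≠ w → ¬ G.Adj v w := by
          intro v hv w hw hvw
          rcases Finset.mem_union.mp hv with hv | hv <;>
            rcases Finset.mem_union.mp hw with hw | hw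
          · exact hadj v hv w (hsub hw)
          · exact hadj v hv w (Finset.mem_inter.mp hw).1
          · intro h
            exact hadj w hw v (Finset.mem_inter.mp hv).1 h.symm
          · exact hS.1 v (Finset.mem_inter.mp hv).2 w (Finset.mem_inter.mp hw).2 hvw
        have hWle : W.card ≤ α := hub ⟨W, hWind, rfl⟩
        have h1 : (I ∪ (U ∩ S)).card + (I ∩ (U ∩ S)).card = I.card + (U ∩ S).card :=
          Finset.card_union_add_card_inter _ _
        have h2 : I ∩ (U ∩ S) = S ∩ I := by
          ext x
          simp only [Finset.mem_inter]
          constructor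
          · rintro ⟨h, _, h'⟩; exact ⟨h', h⟩
          · rintro ⟨h, h'⟩; exact ⟨h', hsub h', h⟩
        have h3 : (U ∪ S).card + (U ∩ S).card = U.card + S.card :=
          Finset.card_union_add_card_inter _ _
        have h4 : (S ∪ U).card = (U ∪ S).card := by rw [Finset.union_comm]
        rw [h2] at h1
        have h5 : S.card = α := hS.2
        rw [← hW] at h1
        omega
      · intro x hx
        rw [Finset.mem_inter] at hx
        exact Finset.mem_union_right _ (hsub hx.2)
  -- apply to the family of all maximum independent sets
  set F : Finset (Finset V) := Finset.univ.filter P with hF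
  have hS₀F : S₀ ∈ F := by
    simp only [hF, Finset.mem_filter, Finset.mem_univ, true_and]
    exact ⟨hS₀ind, hS₀card⟩
  obtain ⟨hcard, hsub, hadj⟩ := key F ⟨S₀, hS₀F⟩ (fun T hT => by
    simpa only [hF, Finset.mem_filter, Finset.mem_univ, true_and] using hT)
  -- characterize the inf
  have hmemI : ∀ x, x ∈ F.inf id ↔ x = u := by
    intro x
    have h1 : x ∈ F.inf id ↔ ∀ T ∈ F, x ∈ T := by
      constructor
      · intro h T hT
        exact (Finset.inf_le hT : F.inf id ⊆ id T) h
      · intro h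
        have : ({x} : Finset V) ≤ F.inf id :=
          Finset.le_inf fun T hT => Finset.singleton_subset_iff.mpr (h T hT)
        exact this (Finset.mem_singleton_self x)
    have h2 : (∀ T ∈ F, x ∈ T) ↔ x ∈ (⋂ S ∈ {S : Finset V | P S}, (S : Set V)) := by
      rw [Set.mem_iInter₂]
      constructor
      · intro h T hT
        exact h T (by simp only [hF, Finset.mem_filter, Finset.mem_univ, true_and]; exact hT)
      · intro h T hT
        exact h T (by simpa only [hF, Finset.mem_filter, Finset.mem_univ, true_and, Set.mem_setOf_eq] using hT)
    rw [h1, h2, hu, Set.mem_singleton_iff]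
  have hIeq : F.inf id = {u} := by
    ext x; rw [hmemI, Finset.mem_singleton]
  have hIcard : (F.inf id).card = 1 := by rw [hIeq]; exact Finset.card_singleton u
  have hUle : (F.sup id).card ≤ Fintype.card V := Finset.card_le_univ _
  have h2α : 2 * α = Fintype.card V + 1 := by omega
  have hUcard : (F.sup id).card = Fintype.card V := by omega
  have hUuniv : F.sup id = Finset.univ := Finset.eq_univ_of_card _ hUcard
  refine ⟨h2α, fun v => ?_⟩
  have hu' : u ∈ F.inf id := (hmemI u).mpr rfl
  exact hadj u hu' v (hUuniv ▸ Finset.mem_univ v)
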